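/- arXiv:2203.00005 — 3 statements merged into one kernel-verified Lean document; each statement's English description precedes it below -/
import Mathlib

section
/- Let (m_n) be a sequence of complex numbers with m_n → ∞, θ ∈ (0,1), and a ∈ ℂ with a ≠ 0. Then there is no entire function f such that both sup_{t∈[0,θ]} |f(m_n e^{2πit}) − a| → 0 and ∫_{[m_n, m_n e^{2πiθ}]} f(z) dz → 0 as n → ∞. -/
open Complex Filter Set MeasureTheory Metric


lemma my_exists_primitive {f : ℂ → ℂ} (hf : Differentiable ℂ f) :
    ∃ F : ℂ → ℂ, ∀ z, HasDerivAt F (f z) z := by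
  have hfd : ∀ z, HasDerivAt f (deriv f z) z := fun z => (hf z).hasDerivAt
  have hfc : Continuous f := hf.continuous
  have hf'c : Continuous (deriv f) :=
    (contDiff_one_iff_deriv.mp (hf.contDiff : ContDiff ℂ 1 f)).2
  refine ⟨fun z => ∫ t in (0:ℝ)..1, z * f ((t:ℂ) * z), fun z₀ => ?_⟩
  set R : ℝ := ‖z₀‖ + 1 with hR
  have hR0 : (0:ℝ) ≤ R := by positivity
  obtain ⟨w₀, -, hC⟩ := (isCompact_closedBall (0:ℂ) R).exists_isMaxOn
    ⟨0, by simpa using hR0⟩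
    (((hfc.norm).add (continuous_const.mul hf'c.norm)).continuousOn :
      ContinuousOn (fun w => ‖f w‖ + R * ‖deriv f w‖) _)
  set C : ℝ := ‖f w₀‖ + R * ‖deriv f w₀‖ with hCdef
  have key := intervalIntegral.hasDerivAt_integral_of_dominated_loc_of_deriv_le
    (F := fun x (t : ℝ) => x * f ((t:ℂ) * x))
    (F' := fun x (t : ℝ) => f ((t:ℂ) * x) + x * (deriv f ((t:ℂ) * x) * (t:ℂ)))
    (x₀ := z₀) (a := (0:ℝ)) (b := 1) (μ := volume) (bound := fun _ => C)
    (s := ball z₀ 1) (ball_mem_nhds z₀ one_pos)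
    ?meas ?int ?meas' ?bnd ?bint ?diff
  case meas =>
    filter_upwards with x
    exact (Continuous.aestronglyMeasurable (by fun_prop))
  case int => exact (Continuous.intervalIntegrable (by fun_prop) _ _)
  case meas' => exact (Continuous.aestronglyMeasurable (by fun_prop))
  case bint => exact intervalIntegrable_const
  case bnd =>
    filter_upwards with t ht x hx
    have ht' : t ∈ Set.Ioc (0:ℝ) 1 := by rwa [Set.uIoc_of_le (by norm_num : (0:ℝ) ≤ 1)] at ht
    have hxle : ‖x‖ ≤ R := by
      have h1 := mem_ball_iff_norm.mp hx
      have h2 : ‖x‖ - ‖z₀‖ ≤ ‖x - z₀‖ := norm_sub_norm_le x z₀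
      rw [hR]; linarith
    have htx : (t:ℂ) * x ∈ closedBall (0:ℂ) R := by
      rw [mem_closedBall_zero_iff]
      calc ‖(t:ℂ) * x‖ = |t| * ‖x‖ := by
            rw [norm_mul, Complex.norm_real, Real.norm_eq_abs]
        _ ≤ 1 * R := by
            apply mul_le_mul (by rw [abs_of_pos ht'.1]; exact ht'.2) hxle (norm_nonneg _) one_pos.le
        _ = R := one_mul R
    have hb : ‖f ((t:ℂ) * x)‖ + R * ‖deriv f ((t:ℂ) * x)‖ ≤ C := hC htx
    calc ‖f ((t:ℂ) * x) + x * (deriv f ((t:ℂ) * x) * (t:ℂ))‖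
        ≤ ‖f ((t:ℂ) * x)‖ + ‖x * (deriv f ((t:ℂ) * x) * (t:ℂ))‖ := norm_add_le _ _
      _ ≤ ‖f ((t:ℂ) * x)‖ + R * ‖deriv f ((t:ℂ) * x)‖ := by
          gcongr ‖f ((t:ℂ) * x)‖ + ?_
          rw [norm_mul, norm_mul, Complex.norm_real, Real.norm_eq_abs]
          calc ‖x‖ * (‖deriv f ((t:ℂ) * x)‖ * |t|)
              ≤ R * (‖deriv f ((t:ℂ) * x)‖ * 1) := by
                apply mul_le_mul hxle _ (by positivity) hR0
                gcongr
                rw [abs_of_pos ht'.1]; exact ht'.2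
            _ = R * ‖deriv f ((t:ℂ) * x)‖ := by ring
      _ ≤ C := hb
  case diff =>
    filter_upwards with t ht x hx
    have hinner : HasDerivAt (fun x : ℂ => (t:ℂ) * x) (t:ℂ) x := by
      simpa using (hasDerivAt_id x).const_mul (t:ℂ)
    have h1 : HasDerivAt (fun x : ℂ => f ((t:ℂ) * x)) (deriv f ((t:ℂ) * x) * (t:ℂ)) x :=
      (hfd _).comp x hinner
    have h2 := (hasDerivAt_id x).mul h1
    convert h2 using 1
    · rfl
    · rfl
    simp only [id_eq]
    ring
  -- now key.2 : HasDerivAt (fun x => ∫ ...) (∫ t in 0..1, F' z₀ t) z₀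
  have hval : (∫ t in (0:ℝ)..1, (f ((t:ℂ) * z₀) + z₀ * (deriv f ((t:ℂ) * z₀) * (t:ℂ)))) = f z₀ := by
    have heq : ∀ t : ℝ, HasDerivAt (fun s : ℝ => (s:ℂ) * f ((s:ℂ) * z₀))
        (f ((t:ℂ) * z₀) + z₀ * (deriv f ((t:ℂ) * z₀) * (t:ℂ))) t := by
      intro t
      have hg : HasDerivAt (fun w : ℂ => w * f (w * z₀))
          (1 * f ((t:ℂ) * z₀) + (t:ℂ) * (deriv f ((t:ℂ) * z₀) * z₀)) (t:ℂ) :=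
        (hasDerivAt_id _).mul (((hfd _).comp _ (by
          simpa using (hasDerivAt_id ((t:ℂ))).mul_const z₀ :
          HasDerivAt (fun w : ℂ => w * z₀) z₀ (t:ℂ))))
      have h3 := hg.comp_ofReal
      convert h3 using 1
      ring
    have h4 := intervalIntegral.integral_eq_sub_of_hasDerivAt (a := (0:ℝ)) (b := 1)
      (f := fun s : ℝ => (s:ℂ) * f ((s:ℂ) * z₀))
      (fun t _ => heq t) (Continuous.intervalIntegrable (by fun_prop) _ _)
    rw [h4]
    norm_num
  rw [hval] at key
  exact key.2

/-- The contour integral of `f` along the oriented straight segment from `a` to `b`. -/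
noncomputable def segIntegral (f : ℂ → ℂ) (a b : ℂ) : ℂ :=
  ∫ t in (0:ℝ)..1, (b - a) * f (a + (t : ℂ) * (b - a))

lemma my_segIntegral_eq {f F : ℂ → ℂ} (hF : ∀ z, HasDerivAt F (f z) z)
    (hfc : Continuous f) (z w : ℂ) : segIntegral f z w = F w - F z := by
  have heq : ∀ t : ℝ, HasDerivAt (fun s : ℝ => F (z + (s:ℂ) * (w - z)))
      ((w - z) * f (z + (t:ℂ) * (w - z))) t := by
    intro t
    have hinner : HasDerivAt (fun x : ℂ => z + x * (w - z)) (w - z) (t:ℂ) := by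
      simpa using ((hasDerivAt_id ((t:ℂ))).mul_const (w - z)).const_add z
    have hg := (hF _).comp ((t:ℂ)) hinner
    have h3 := hg.comp_ofReal
    convert h3 using 1
    · rfl
    ring
  have h4 := intervalIntegral.integral_eq_sub_of_hasDerivAt (a := (0:ℝ)) (b := 1)
    (f := fun s : ℝ => F (z + (s:ℂ) * (w - z)))
    (fun t _ => heq t) (Continuous.intervalIntegrable (by fun_prop) _ _)
  rw [segIntegral, h4]
  norm_num

lemma my_arcIntegral_eq {f F : ℂ → ℂ} (hF : ∀ z, HasDerivAt F (f z) z)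
    (hfc : Continuous f) (m : ℂ) (θ : ℝ) :
    (∫ t in (0:ℝ)..θ, (2 * Real.pi * Complex.I) * m *
        Complex.exp (2 * Real.pi * Complex.I * t) * f (m * Complex.exp (2 * Real.pi * Complex.I * t)))
      = F (m * Complex.exp (2 * Real.pi * Complex.I * θ)) - F m := by
  set c : ℂ := 2 * Real.pi * Complex.I with hc
  have heq : ∀ t : ℝ, HasDerivAt (fun s : ℝ => F (m * Complex.exp (c * s)))
      (c * m * Complex.exp (c * t) * f (m * Complex.exp (c * t))) t := by
    intro t
    have hexp : HasDerivAt (fun w : ℂ => Complex.exp (c * w)) (Complex.exp (c * (t:ℂ)) * c) (t:ℂ) := by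
      have hinner : HasDerivAt (fun w : ℂ => c * w) c (t:ℂ) := by
        simpa using (hasDerivAt_id ((t:ℂ))).const_mul c
      exact (Complex.hasDerivAt_exp _).comp _ hinner
    have hinner2 : HasDerivAt (fun w : ℂ => m * Complex.exp (c * w))
        (m * (Complex.exp (c * (t:ℂ)) * c)) (t:ℂ) := hexp.const_mul m
    have hg := (hF _).comp ((t:ℂ)) hinner2
    have h3 := hg.comp_ofReal
    convert h3 using 1
    · rfl
    ring
  have h4 := intervalIntegral.integral_eq_sub_of_hasDerivAt (a := (0:ℝ)) (b := θ)
    (f := fun s : ℝ => F (m * Complex.exp (c * s)))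
    (fun t _ => heq t) (Continuous.intervalIntegrable (by fun_prop) _ _)
  rw [h4]
  norm_num

theorem stmt_4 (m : ℕ → ℂ) (hm : Tendsto (fun n => ‖m n‖) atTop atTop)
    (θ : ℝ) (hθ : θ ∈ Set.Ioo (0:ℝ) 1) (a : ℂ) (ha : a ≠ 0) :
    ¬ ∃ f : ℂ → ℂ, Differentiable ℂ f ∧
      TendstoUniformlyOn
        (fun n (t : ℝ) => f (m n * Complex.exp (2 * Real.pi * Complex.I * t)))
        (fun _ => a) atTop (Set.Icc 0 θ) ∧
      Tendsto
        (fun n => segIntegral f (m n) (m n * Complex.exp (2 * Real.pi * Complex.I * θ)))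
        atTop (nhds 0) := by
  rintro ⟨f, hf, hunif, hint⟩
  obtain ⟨hθ0, hθ1⟩ := hθ
  obtain ⟨F, hF⟩ := my_exists_primitive hf
  have hfc : Continuous f := hf.continuous
  set c : ℂ := 2 * Real.pi * Complex.I with hc
  set E : ℂ := Complex.exp (c * θ) with hE
  have hcne : c ≠ 0 := by
    simp [hc, Real.pi_ne_zero, Complex.I_ne_zero, Complex.ofReal_ne_zero]
  have hE1 : E ≠ 1 := by
    rw [hE, Ne, Complex.exp_eq_one_iff]
    push_neg
    intro k hk
    have hzero : c * ((θ:ℂ) - (k:ℂ)) = 0 := by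
      rw [mul_sub, hk, hc]; ring
    rcases mul_eq_zero.mp hzero with h | h
    · exact hcne h
    · have hθk : (θ:ℂ) = (k:ℂ) := sub_eq_zero.mp h
      have hθk' : θ = (k:ℝ) := by exact_mod_cast hθk
      rw [hθk'] at hθ0 hθ1
      have h0 : 0 < k := by exact_mod_cast hθ0
      have h1 : k < 1 := by exact_mod_cast hθ1
      omega
  set K : ℝ := ‖a‖ * ‖E - 1‖ with hK
  have hKpos : 0 < K := by
    apply mul_pos <;> simp [norm_pos_iff, sub_ne_zero, ha, hE1]
  set ε : ℝ := K / (4 * Real.pi * θ) with hε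
  have hεpos : 0 < ε := by
    apply div_pos hKpos
    positivity
  -- the three eventually facts
  have h1 := Metric.tendstoUniformlyOn_iff.mp hunif ε hεpos
  have h2 := hm.eventually_ge_atTop 1
  have h3 : ∀ᶠ n in atTop, ‖segIntegral f (m n) (m n * Complex.exp (c * θ))‖ < K / 2 := by
    have := hint.eventually (Metric.ball_mem_nhds (0:ℂ) (by positivity : (0:ℝ) < K/2))
    filter_upwards [this] with n hn
    simpa [mem_ball_zero_iff] using hn
  obtain ⟨n, hn1, hn2, hn3⟩ := (h1.and (h2.and h3)).exists
  -- arc integral equals seg integral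
  have harc := my_arcIntegral_eq hF hfc (m n) θ
  have hseg := my_segIntegral_eq hF hfc (m n) (m n * Complex.exp (c * θ))
  -- B: constant integral
  have hBint : (∫ t in (0:ℝ)..θ, c * m n * Complex.exp (c * t) * a)
      = a * m n * (E - 1) := by
    have heq : ∀ t : ℝ, HasDerivAt (fun s : ℝ => a * m n * Complex.exp (c * s))
        (c * m n * Complex.exp (c * t) * a) t := by
      intro t
      have hexp : HasDerivAt (fun w : ℂ => Complex.exp (c * w)) (Complex.exp (c * (t:ℂ)) * c) (t:ℂ) := by
        have hinner : HasDerivAt (fun w : ℂ => c * w) c (t:ℂ) := by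
          simpa using (hasDerivAt_id ((t:ℂ))).const_mul c
        exact (Complex.hasDerivAt_exp _).comp _ hinner
      have h3 := (hexp.const_mul (a * m n)).comp_ofReal
      convert h3 using 1
      ring
    have h4 := intervalIntegral.integral_eq_sub_of_hasDerivAt (a := (0:ℝ)) (b := θ)
      (f := fun s : ℝ => a * m n * Complex.exp (c * s))
      (fun t _ => heq t) (Continuous.intervalIntegrable (by fun_prop) _ _)
    rw [h4]
    simp [hE]
    ring
  -- difference estimate
  have hdiff : ‖(F (m n * Complex.exp (c * θ)) - F (m n)) - a * m n * (E - 1)‖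
      ≤ (2 * Real.pi * ‖m n‖ * ε) * |θ - 0| := by
    rw [← harc, ← hBint, ← intervalIntegral.integral_sub
      (Continuous.intervalIntegrable (by fun_prop) _ _)
      (Continuous.intervalIntegrable (by fun_prop) _ _)]
    apply intervalIntegral.norm_integral_le_of_norm_le_const
    intro t ht
    rw [Set.uIoc_of_le hθ0.le] at ht
    have htmem : t ∈ Set.Icc 0 θ := ⟨ht.1.le, ht.2⟩
    have hfa := hn1 t htmem
    have : c * m n * Complex.exp (c * t) * f (m n * Complex.exp (c * t))
        - c * m n * Complex.exp (c * t) * a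
        = c * m n * Complex.exp (c * t) * (f (m n * Complex.exp (c * t)) - a) := by ring
    rw [this]
    have hcnorm : ‖c‖ = 2 * Real.pi := by
      rw [hc]
      simp [norm_mul, Complex.norm_real, _root_.abs_of_nonneg Real.pi_pos.le]
    have hexpnorm : ‖Complex.exp (c * t)‖ = 1 := by
      have : c * (t:ℂ) = ((2 * Real.pi * t : ℝ):ℂ) * Complex.I := by
        push_cast [hc]; ring
      rw [this, Complex.norm_exp_ofReal_mul_I]
    have hfan : ‖f (m n * Complex.exp (c * t)) - a‖ ≤ ε := by
      rw [← dist_eq_norm, dist_comm]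
      exact hfa.le
    calc ‖c * m n * Complex.exp (c * t) * (f (m n * Complex.exp (c * t)) - a)‖
        = ‖c‖ * ‖m n‖ * ‖Complex.exp (c * t)‖ * ‖f (m n * Complex.exp (c * t)) - a‖ := by
          simp [norm_mul]
      _ ≤ (2 * Real.pi) * ‖m n‖ * 1 * ε := by
          rw [hcnorm, hexpnorm]
          gcongr
      _ = 2 * Real.pi * ‖m n‖ * ε := by
          ring
  -- final contradiction
  have hBnorm : ‖a * m n * (E - 1)‖ = ‖m n‖ * K := by
    simp [hK, norm_mul]
    ring
  have habs : |θ - 0| = θ := by rw [sub_zero, abs_of_pos hθ0]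
  rw [habs] at hdiff
  have hεθ : 2 * Real.pi * ‖m n‖ * ε * θ = ‖m n‖ * (K / 2) := by
    rw [hε]
    field_simp
    ring
  rw [hεθ] at hdiff
  have hlower : ‖m n‖ * K - ‖m n‖ * (K / 2)
      ≤ ‖F (m n * Complex.exp (c * θ)) - F (m n)‖ := by
    have htri := abs_norm_sub_norm_le (F (m n * Complex.exp (c * θ)) - F (m n))
      (a * m n * (E - 1))
    have h5 := (abs_le.mp htri).1
    rw [hBnorm] at h5
    linarith
  rw [← hseg] at hlower
  have : ‖m n‖ * K - ‖m n‖ * (K / 2) = ‖m n‖ * (K / 2) := by ring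
  rw [this] at hlower
  have h1le : 1 * (K / 2) ≤ ‖m n‖ * (K / 2) := by
    apply mul_le_mul_of_nonneg_right hn2 (by positivity)
  rw [one_mul] at h1le
  linarith [hn3, h1le.trans hlower]
end

section
/- Let (λ_n) be a sequence of nonzero complex numbers with λ_n → ∞, θ ∈ (0,1), and G an entire function with G(0) = 0 and G′(0) ≠ 0. Then there is no entire function f and no sequence (m_n) with m_n ∈ {λ_k : k ∈ ℕ} such that for every compact L ⊆ ℂ, sup_{(t,z)∈[0,θ]×L} |f(z + m_n e^{2πit}) − G(z)| → 0 as n → ∞. -/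
open Complex Filter Set
open Topology

lemma aux_abs_exp (φ : ℝ) (h0 : 0 ≤ φ) (h1 : φ ≤ Real.pi) :
    2 / Real.pi * φ ≤ ‖Complex.exp (φ * Complex.I) - 1‖ ∧
      ‖Complex.exp (φ * Complex.I) - 1‖ ≤ φ := by
  have : Complex.exp (φ * Complex.I) - 1 = ((Real.cos φ - 1 : ℝ) : ℂ) + (Real.sin φ : ℝ) * Complex.I := by
    rw [Complex.exp_mul_I]
    push_cast
    ring
  rw [this, Complex.norm_add_mul_I]
  have hid : (Real.cos φ - 1) ^ 2 + Real.sin φ ^ 2 = 2 - 2 * Real.cos φ := by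
    have := Real.sin_sq_add_cos_sq φ
    nlinarith
  rw [hid]
  constructor
  · have hcos : Real.cos φ ≤ 1 - 2 / Real.pi ^ 2 * φ ^ 2 :=
      Real.cos_le_one_sub_mul_cos_sq (by rwa [_root_.abs_of_nonneg h0])
    have h2 : (2 / Real.pi * φ) ^ 2 ≤ 2 - 2 * Real.cos φ := by
      have hπ : (0:ℝ) < Real.pi := Real.pi_pos
      have : (2 / Real.pi * φ) ^ 2 = 4 / Real.pi ^ 2 * φ ^ 2 := by
        field_simp; ring
      rw [this]
      have h4 : 4 / Real.pi ^ 2 * φ ^ 2 = 2 * (2 / Real.pi ^ 2 * φ ^ 2) := by ring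
      rw [h4]; linarith
    calc 2 / Real.pi * φ = Real.sqrt ((2 / Real.pi * φ) ^ 2) := by
          rw [Real.sqrt_sq (by positivity)]
      _ ≤ _ := Real.sqrt_le_sqrt h2
  · have hcos : 1 - φ ^ 2 / 2 ≤ Real.cos φ := Real.one_sub_sq_div_two_le_cos
    calc Real.sqrt (2 - 2 * Real.cos φ) ≤ Real.sqrt (φ ^ 2) := Real.sqrt_le_sqrt (by nlinarith)
      _ = φ := Real.sqrt_sq h0

theorem stmt_7 (lam : ℕ → ℂ) (hlam0 : ∀ n, lam n ≠ 0)
    (hlam : Tendsto (fun n => ‖lam n‖) atTop atTop)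
    (θ : ℝ) (hθ : θ ∈ Set.Ioo (0:ℝ) 1)
    (G : ℂ → ℂ) (hG : Differentiable ℂ G) (hG0 : G 0 = 0) (hG' : deriv G 0 ≠ 0) :
    ¬ ∃ (f : ℂ → ℂ) (m : ℕ → ℂ), Differentiable ℂ f ∧ (∀ n, ∃ k, m n = lam k) ∧
      ∀ L : Set ℂ, IsCompact L →
        TendstoUniformlyOn
          (fun n (p : ℝ × ℂ) => f (p.2 + m n * Complex.exp (2 * Real.pi * Complex.I * p.1)))
          (fun p => G p.2) atTop (Set.Icc 0 θ ×ˢ L) := by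
  rintro ⟨f, m, hf, hmem, hL⟩
  obtain ⟨θpos, θlt⟩ := hθ
  have hπ : (0:ℝ) < Real.pi := Real.pi_pos
  obtain ⟨N, hN⟩ := eventually_atTop.mp (hlam.eventually_ge_atTop 1)
  set δ : ℝ := min 1 ((Finset.range (N+1)).inf' (by simp) fun k => ‖lam k‖) with hδdef
  have hδpos : 0 < δ := by
    refine lt_min one_pos ?_
    rw [Finset.lt_inf'_iff]
    intro k _
    exact norm_pos_iff.mpr (hlam0 k)
  have hδ : ∀ n, δ ≤ ‖m n‖ := by
    intro n
    obtain ⟨k, hk⟩ := hmem n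
    rw [hk]
    rcases lt_or_ge k (N+1) with h | h
    · exact le_trans (min_le_right _ _) (Finset.inf'_le _ (Finset.mem_range.mpr h))
    · exact le_trans (min_le_left _ _) (hN k (by omega))
  -- Key: arbitrarily small nonzero points where G is small relative to |w|
  have key : ∀ ε : ℝ, 0 < ε → ∃ w : ℂ, w ≠ 0 ∧ ‖w‖ ≤ ε ∧
      ‖G w‖ ≤ ε * ‖w‖ := by
    intro ε hε
    set c : ℝ := min (min (θ * δ) (δ / 2)) (ε / (2 * Real.pi)) with hc
    have hcpos : 0 < c := lt_min (lt_min (by positivity) (by positivity)) (by positivity)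
    have hcθ : c ≤ θ * δ := le_trans (min_le_left _ _) (min_le_left _ _)
    have hcδ : c ≤ δ / 2 := le_trans (min_le_left _ _) (min_le_right _ _)
    have hcε : c ≤ ε / (2 * Real.pi) := min_le_right _ _
    have hcomp : IsCompact (Metric.closedBall (0:ℂ) ε) := isCompact_closedBall _ _
    have huc := hL _ hcomp
    rw [Metric.tendstoUniformlyOn_iff] at huc
    obtain ⟨n, hn⟩ := (huc (2 * ε * c) (by positivity)).exists
    set M := ‖m n‖ with hM
    have hMpos : 0 < M := lt_of_lt_of_le hδpos (hδ n)
    set u : ℝ := c / M with hu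
    have hupos : 0 < u := by positivity
    have huθ : u ≤ θ := by
      rw [hu, div_le_iff₀ hMpos]
      calc c ≤ θ * δ := hcθ
        _ ≤ θ * M := by nlinarith [hδ n]
    have hu2 : u ≤ 1/2 := by
      rw [hu, div_le_iff₀ hMpos]
      linarith [hδ n]
    set φ : ℝ := 2 * Real.pi * u with hφ
    have hφ0 : 0 ≤ φ := by positivity
    have hφπ : φ ≤ Real.pi := by
      rw [hφ]; nlinarith
    obtain ⟨hlow, hhigh⟩ := aux_abs_exp φ hφ0 hφπ
    set w : ℂ := m n * (Complex.exp (φ * Complex.I) - 1) with hw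
    have hWabs : ‖w‖ = M * ‖Complex.exp (φ * Complex.I) - 1‖ := by
      rw [hw, norm_mul]
    have habs_low : 4 * c ≤ ‖w‖ := by
      have h4 : 2 / Real.pi * φ = 4 * u := by rw [hφ]; field_simp; ring
      have : M * (4 * u) ≤ M * ‖Complex.exp (φ * Complex.I) - 1‖ := by
        rw [← h4]; exact mul_le_mul_of_nonneg_left hlow hMpos.le
      rw [hWabs]
      calc 4 * c = M * (4 * u) := by rw [hu]; field_simp; try ring
        _ ≤ _ := this
    have habs_high : ‖w‖ ≤ 2 * Real.pi * c := by
      rw [hWabs]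
      calc M * ‖Complex.exp (φ * Complex.I) - 1‖ ≤ M * φ :=
            mul_le_mul_of_nonneg_left hhigh hMpos.le
        _ = 2 * Real.pi * c := by rw [hφ, hu]; field_simp; try ring
    have hwε : ‖w‖ ≤ ε := by
      refine habs_high.trans ?_
      calc 2 * Real.pi * c ≤ 2 * Real.pi * (ε / (2 * Real.pi)) := by nlinarith
        _ = ε := by field_simp
    have hw0 : w ≠ 0 := by
      intro h
      rw [h] at habs_low
      simp at habs_low
      linarith
    refine ⟨w, hw0, hwε, ?_⟩
    -- evaluate uniform convergence at two points
    have harg : (↑φ : ℂ) * Complex.I = 2 * ↑Real.pi * Complex.I * ↑u := by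
      rw [hφ]; push_cast; ring
    have mem1 : ((0:ℝ), w) ∈ Set.Icc (0:ℝ) θ ×ˢ Metric.closedBall (0:ℂ) ε := by
      refine ⟨⟨le_refl 0, θpos.le⟩, ?_⟩
      simpa [Metric.mem_closedBall, Complex.dist_eq] using hwε
    have mem2 : (u, (0:ℂ)) ∈ Set.Icc (0:ℝ) θ ×ˢ Metric.closedBall (0:ℂ) ε := by
      exact ⟨⟨hupos.le, huθ⟩, by simpa [Metric.mem_closedBall] using hε.le⟩
    have e1 := hn ((0:ℝ), w) mem1
    have e2 := hn (u, (0:ℂ)) mem2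
    simp only [Complex.ofReal_zero, mul_zero, Complex.exp_zero, mul_one] at e1
    have hpteq : w + m n = (0:ℂ) + m n * Complex.exp (2 * ↑Real.pi * Complex.I * ↑u) := by
      rw [hw, zero_add, ← harg]; ring
    rw [hpteq] at e1
    rw [Complex.dist_eq] at e1 e2
    have htri : ‖G w‖ ≤ 4 * ε * c := by
      have : ‖G w‖ = ‖(G w - f ((0:ℂ) + m n * Complex.exp (2 * ↑Real.pi * Complex.I * ↑u))) - (G (0:ℂ) - f ((0:ℂ) + m n * Complex.exp (2 * ↑Real.pi * Complex.I * ↑u)))‖ := by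
        rw [hG0]; ring_nf
      rw [this]
      calc _ ≤ ‖G w - f ((0:ℂ) + m n * Complex.exp (2 * ↑Real.pi * Complex.I * ↑u))‖ + ‖G (0:ℂ) - f ((0:ℂ) + m n * Complex.exp (2 * ↑Real.pi * Complex.I * ↑u))‖ := by
            exact norm_sub_le _ _
        _ ≤ 4 * ε * c := by linarith
    calc ‖G w‖ ≤ 4 * ε * c := htri
      _ ≤ ε * (4 * c) := by ring_nf; exact le_refl _
      _ ≤ ε * ‖w‖ := mul_le_mul_of_nonneg_left habs_low hε.le
  -- build sequence and contradict deriv G 0 ≠ 0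
  choose W hW0 hWsmall hWG using fun j : ℕ => key (1/((j:ℝ)+1)) (by positivity)
  have hone : Tendsto (fun j : ℕ => 1/((j:ℝ)+1)) atTop (𝓝 0) :=
    tendsto_one_div_add_atTop_nhds_zero_nat
  have hWlim : Tendsto W atTop (𝓝[≠] (0:ℂ)) := by
    rw [tendsto_nhdsWithin_iff]
    constructor
    · rw [tendsto_zero_iff_norm_tendsto_zero]
      exact squeeze_zero (fun j => norm_nonneg _)
        (fun j => by simpa using hWsmall j) hone
    · exact Eventually.of_forall fun j => hW0 j
  have hslope := hasDerivAt_iff_tendsto_slope.mp (hG 0).hasDerivAt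
  have h2 : Tendsto (fun j => slope G 0 (W j)) atTop (𝓝 (deriv G 0)) := hslope.comp hWlim
  have h3 : Tendsto (fun j => slope G 0 (W j)) atTop (𝓝 0) := by
    rw [tendsto_zero_iff_norm_tendsto_zero]
    refine squeeze_zero (fun j => norm_nonneg _) (fun j => ?_) hone
    have hs : slope G 0 (W j) = G (W j) / W j := by
      rw [slope_def_field, hG0, sub_zero, sub_zero]
    rw [hs, norm_div]
    rw [div_le_iff₀ (by simpa [norm_pos_iff] using hW0 j)]
    simpa [mul_comm] using hWG j
  exact hG' (tendsto_nhds_unique h2 h3)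
end

section
/- Let (λ_n) be a sequence of nonzero complex numbers with λ_n → ∞, θ ∈ (0,1), and G a nonconstant entire function. Then there is no entire function f and no sequence (m_n) with m_n ∈ {λ_k : k ∈ ℕ} such that for every compact L ⊆ ℂ, sup_{(t,z)∈[0,θ]×L} |f(z + m_n e^{2πit}) − G(z)| → 0 as n → ∞. (Main theorem: U(λ,θ,G) = ∅.) -/
open Complex Filter Set Topology

theorem stmt_8 (lam : ℕ → ℂ) (hlam0 : ∀ n, lam n ≠ 0)
    (hlam : Tendsto (fun n => ‖lam n‖) atTop atTop)
    (θ : ℝ) (hθ : θ ∈ Set.Ioo (0:ℝ) 1)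
    (G : ℂ → ℂ) (hG : Differentiable ℂ G) (hGnc : ¬ ∃ c : ℂ, ∀ z, G z = c) :
    ¬ ∃ (f : ℂ → ℂ) (m : ℕ → ℂ), Differentiable ℂ f ∧ (∀ n, ∃ k, m n = lam k) ∧
      ∀ L : Set ℂ, IsCompact L →
        TendstoUniformlyOn
          (fun n (p : ℝ × ℂ) => f (p.2 + m n * Complex.exp (2 * Real.pi * Complex.I * p.1)))
          (fun p => G p.2) atTop (Set.Icc 0 θ ×ˢ L) := by
  rintro ⟨f, m, hf, hm, hconv⟩
  -- lower bound for |lam k|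
  obtain ⟨N, hN⟩ := (hlam.eventually_ge_atTop 1).exists_forall_of_atTop
  set c₀ : ℝ := min ((Finset.range (N+1)).inf' (by simp) (fun k => ‖lam k‖)) 1 with hc₀
  have hc₀pos : 0 < c₀ := by
    apply lt_min _ one_pos
    apply Finset.lt_inf'_iff (by simp) |>.mpr
    intro k _
    exact norm_pos_iff.mpr (hlam0 k)
  have hc₀le : ∀ k : ℕ, c₀ ≤ ‖lam k‖ := by
    intro k
    rcases le_or_gt k N with hk | hk
    · exact le_trans (min_le_left _ _)
        (Finset.inf'_le _ (Finset.mem_range.mpr (Nat.lt_succ_of_le hk)))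
    · exact le_trans (min_le_right _ _) (hN k hk.le)
  have hmlb : ∀ n, c₀ ≤ ‖m n‖ := by
    intro n; obtain ⟨k, hk⟩ := hm n; rw [hk]; exact hc₀le k
  -- e^{2πiθ} ≠ 1
  have hEθ : Complex.exp (2 * Real.pi * Complex.I * θ) ≠ 1 := by
    intro h
    rw [Complex.exp_eq_one_iff] at h
    obtain ⟨n, hn⟩ := h
    have h2 : (θ:ℂ) * (2 * Real.pi * Complex.I) = (n:ℂ) * (2 * Real.pi * Complex.I) := by
      rw [← hn]; ring
    have h3 : (θ:ℂ) = (n:ℂ) := by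
      have hne : (2 * Real.pi * Complex.I : ℂ) ≠ 0 := by
        simp [Real.pi_ne_zero, Complex.I_ne_zero, Complex.ofReal_ne_zero]
      exact mul_right_cancel₀ hne h2
    have h4 : θ = (n:ℝ) := by exact_mod_cast h3
    have h5 : (0:ℤ) < n := by exact_mod_cast h4 ▸ hθ.1
    have h6 : (n:ℝ) < 1 := h4 ▸ hθ.2
    have h7 : (1:ℤ) ≤ n := h5
    exact absurd h6 (not_lt.mpr (by exact_mod_cast h7))
  set ε : ℝ := c₀ * ‖Complex.exp (2 * Real.pi * Complex.I * θ) - 1‖ with hε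
  have hεpos : 0 < ε :=
    mul_pos hc₀pos (norm_pos_iff.mpr (sub_ne_zero.mpr hEθ))
  -- key claim
  have key : ∀ s : ℝ, 0 < s → s ≤ ε → ∃ p : ℂ, ‖p‖ = s ∧ G p = G 0 := by
    intro s hs hsε
    have ht : ∀ n, ∃ t, t ∈ Icc (0:ℝ) θ ∧
        ‖m n * (Complex.exp (2 * Real.pi * Complex.I * t) - 1)‖ = s := by
      intro n
      have hcont : ContinuousOn
          (fun t : ℝ => ‖m n * (Complex.exp (2 * Real.pi * Complex.I * t) - 1)‖)
          (Icc 0 θ) :=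
        (continuous_norm.comp ((continuous_const.mul
          ((Complex.continuous_exp.comp ((continuous_const.mul Complex.continuous_ofReal))).sub
            continuous_const)))).continuousOn
      have hmem : s ∈ Icc
          (‖m n * (Complex.exp (2 * Real.pi * Complex.I * (0:ℝ)) - 1)‖)
          (‖m n * (Complex.exp (2 * Real.pi * Complex.I * (θ:ℝ)) - 1)‖) := by
        constructor
        · simp [hs.le]
        · rw [norm_mul]
          calc s ≤ ε := hsε
          _ ≤ ‖m n‖ * ‖Complex.exp (2 * Real.pi * Complex.I * θ) - 1‖ :=
            mul_le_mul_of_nonneg_right (hmlb n) (norm_nonneg _)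
      obtain ⟨t, htmem, hts⟩ := intermediate_value_Icc hθ.1.le hcont hmem
      exact ⟨t, htmem, hts⟩
    choose t htmem hts using ht
    set d : ℕ → ℂ := fun n => m n * (Complex.exp (2 * Real.pi * Complex.I * t n) - 1) with hd
    have hdsph : ∀ n, d n ∈ Metric.sphere (0:ℂ) s := by
      intro n
      rw [mem_sphere_zero_iff_norm]
      exact hts n
    obtain ⟨p, hp, φ, hφ, hdp⟩ := (isCompact_sphere (0:ℂ) s).tendsto_subseq hdsph
    -- limit 1: f (m n e^{2πi t n}) → G 0
    have lim1 : Tendsto (fun n => f (m n * Complex.exp (2 * Real.pi * Complex.I * t n)))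
        atTop (𝓝 (G 0)) := by
      rw [Metric.tendsto_nhds]
      intro ε' hε'
      filter_upwards [Metric.tendstoUniformlyOn_iff.mp (hconv {0} isCompact_singleton) ε' hε']
        with n hn
      have := hn (t n, 0) ⟨htmem n, rfl⟩
      simpa [dist_comm] using this
    -- limit A : f (d n + m n) - G (d n) → 0
    have limA : Tendsto (fun n => f (d n + m n) - G (d n)) atTop (𝓝 0) := by
      rw [Metric.tendsto_nhds]
      intro ε' hε'
      filter_upwards [Metric.tendstoUniformlyOn_iff.mp
        (hconv (Metric.closedBall 0 s) (isCompact_closedBall 0 s)) ε' hε'] with n hn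
      have hmem : ((0:ℝ), d n) ∈ Icc (0:ℝ) θ ×ˢ Metric.closedBall (0:ℂ) s :=
        ⟨⟨le_refl 0, hθ.1.le⟩, Metric.sphere_subset_closedBall (hdsph n)⟩
      have := hn ((0:ℝ), d n) hmem
      simpa [dist_eq_norm, norm_sub_rev] using this
    have limB : Tendsto (fun j => G (d (φ j))) atTop (𝓝 (G p)) :=
      (hG.continuous.tendsto p).comp hdp
    have lim2 : Tendsto (fun j => f (d (φ j) + m (φ j))) atTop (𝓝 (G p)) := by
      have h := ((limA.comp hφ.tendsto_atTop).add limB)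
      rw [zero_add] at h
      have hfun : (fun j => f (d (φ j) + m (φ j))) =
          fun j => ((fun n => f (d n + m n) - G (d n)) ∘ φ) j + G (d (φ j)) := by
        funext j; simp only [Function.comp_apply]; ring
      rw [hfun]; exact h
    have heq : ∀ j, d (φ j) + m (φ j)
        = m (φ j) * Complex.exp (2 * Real.pi * Complex.I * t (φ j)) := by
      intro j; rw [hd]; ring
    have lim1' : Tendsto (fun j => f (d (φ j) + m (φ j))) atTop (𝓝 (G 0)) := by
      have := lim1.comp hφ.tendsto_atTop
      convert this using 2 with j
      rw [heq j]
      rfl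
    have hGpG0 : G p = G 0 := tendsto_nhds_unique lim2 lim1'
    refine ⟨p, ?_, hGpG0⟩
    exact mem_sphere_zero_iff_norm.mp hp
  -- identity theorem
  have freq : ∃ᶠ z in 𝓝[≠] (0:ℂ), G z = G 0 := by
    rw [Filter.frequently_iff]
    intro U hU
    obtain ⟨δ, hδ, hball⟩ := Metric.mem_nhdsWithin_iff.mp hU
    obtain ⟨p, hps, hpG⟩ := key (min (δ/2) ε) (lt_min (half_pos hδ) hεpos) (min_le_right _ _)
    refine ⟨p, hball ⟨?_, ?_⟩, hpG⟩
    · rw [Metric.mem_ball, dist_zero_right, hps]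
      exact lt_of_le_of_lt (min_le_left _ _) (half_lt_self hδ)
    · simp only [mem_compl_iff, mem_singleton_iff]
      intro h0
      rw [h0] at hps
      simp at hps
      have := lt_min (half_pos hδ) hεpos
      rw [← hps] at this
      exact lt_irrefl _ this
  have hGA : AnalyticOnNhd ℂ G univ := hG.differentiableOn.analyticOnNhd isOpen_univ
  have hconstA : AnalyticOnNhd ℂ (fun _ : ℂ => G 0) univ := analyticOnNhd_const
  have := hGA.eq_of_frequently_eq hconstA freq
  exact hGnc ⟨G 0, fun z => congrFun this z⟩
end
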